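/- (Theorem 1 of the paper, convex case.) Let (Ω', 𝓖, μ) be a probability space, let X ⊆ ℝⁿ be nonempty closed convex, let X* ⊆ X be nonempty closed convex, and let f : ℝⁿ → ℝ be convex with f(y) = f* for every y ∈ X*. Let β ∈ (0,1), c > 0, 𝓑 > 0 and B_f ≥ 0; set γ = β(1 − β)/(c·𝓑²) and C = (1 + 2β(1 − β)/(c·𝓑²))·B_f². Let (α_t)_{t≥0} be positive and non-increasing, let x_0 ∈ ℝⁿ be deterministic, and let (x_t)_{t≥0} be random vectors in ℝⁿ (with all quantities appearing below measurable and integrable) satisfying, for every t ≥ 0, E[dist²(x_{t+1}, X*)] ≤ E[dist²(x_t, X*)] − 2α_t·E[f(x_t) − f*] − γ·E[dist²(x_t, X)] + C·α_t². For k ≥ 1 set S_k = Σ_{t=0}^{k−1} α_t and x̂_k = (1/S_k)·Σ_{t=0}^{k−1} α_t·x_t. Then: (i) E[f(x̂_k)] − f* ≤ dist²(x_0, X*)/(2S_k) + C·(Σ_{t=0}^{k−1} α_t²)/(2S_k); and (ii) 2·(E[f(x̂_k)] − f*) + (γ/α_0)·E[dist²(x̂_k, X)] ≤ dist²(x_0,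 X*)/S_k + C·(Σ_{t=0}^{k−1} α_t²)/S_k. -/

import Mathlib

open Metric MeasureTheory

/-- The weighted average iterate `x̂_k = (1/S_k) Σ_{t<k} α_t x_t` where
`S_k = Σ_{t<k} α_t`. -/
noncomputable def avgIter {n : ℕ} {Ω' : Type*} (α : ℕ → ℝ)
    (x : ℕ → Ω' → EuclideanSpace ℝ (Fin n)) (k : ℕ) (ω : Ω') :
    EuclideanSpace ℝ (Fin n) :=
  (∑ t ∈ Finset.range k, α t)⁻¹ • ∑ t ∈ Finset.range k, α t • x t ω

lemma infDist_centerMass_le {E : Type*} [NormedAddCommGroup E] [NormedSpace ℝ E] [ProperSpace E]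
    {X : Set E} (hXne : X.Nonempty) (hXcl : IsClosed X) (hXcv : Convex ℝ X)
    {ι : Type*} (s : Finset ι) (w : ι → ℝ) (hw : ∀ i ∈ s, 0 ≤ w i)
    (hS : 0 < ∑ i ∈ s, w i) (z : ι → E) :
    infDist (s.centerMass w z) X ≤ s.centerMass w (fun i => infDist (z i) X) := by
  choose p hpX hpd using fun i => hXcl.exists_infDist_eq_dist hXne (z i)
  have hq : s.centerMass w p ∈ X := hXcv.centerMass_mem hw hS (fun i _ => hpX i)
  have h1 : infDist (s.centerMass w z) X ≤ dist (s.centerMass w z) (s.centerMass w p) :=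
    infDist_le_dist_of_mem hq
  have h2 : dist (s.centerMass w z) (s.centerMass w p)
      ≤ (∑ i ∈ s, w i)⁻¹ * ∑ i ∈ s, w i * infDist (z i) X := by
    rw [dist_eq_norm, Finset.centerMass, Finset.centerMass, ← smul_sub, ← Finset.sum_sub_distrib]
    rw [norm_smul, Real.norm_eq_abs, abs_of_nonneg (inv_nonneg.2 hS.le)]
    gcongr
    calc ‖∑ i ∈ s, (w i • z i - w i • p i)‖ ≤ ∑ i ∈ s, ‖w i • z i - w i • p i‖ :=
          norm_sum_le _ _
      _ = ∑ i ∈ s, w i * infDist (z i) X := by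
          refine Finset.sum_congr rfl fun i hi => ?_
          rw [← smul_sub, norm_smul, Real.norm_eq_abs, abs_of_nonneg (hw i hi),
            ← dist_eq_norm, ← hpd i]
  refine (h1.trans h2).trans_eq ?_
  simp [Finset.centerMass, smul_eq_mul, Finset.mul_sum]

lemma sq_centerMass_le {ι : Type*} (s : Finset ι) (w d : ι → ℝ) (hw : ∀ i ∈ s, 0 ≤ w i)
    (hS : 0 < ∑ i ∈ s, w i) (hd : ∀ i ∈ s, 0 ≤ d i) :
    (s.centerMass w d) ^ 2 ≤ s.centerMass w (fun i => d i ^ 2) := by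
  have h := (convexOn_pow (𝕜 := ℝ) 2).map_centerMass_le (t := s) (w := w) (p := d)
    hw hS (fun i hi => hd i hi)
  exact h

theorem stmt_14 {n : ℕ} {Ω' : Type*} [MeasurableSpace Ω']
    (μ : Measure Ω') [IsProbabilityMeasure μ]
    (X Xstar : Set (EuclideanSpace ℝ (Fin n)))
    (hXne : X.Nonempty) (hXcl : IsClosed X) (hXcv : Convex ℝ X)
    (hXsne : Xstar.Nonempty) (hXscl : IsClosed Xstar) (hXscv : Convex ℝ Xstar)
    (hXsX : Xstar ⊆ X)
    (f : EuclideanSpace ℝ (Fin n) → ℝ) (hf : ConvexOn ℝ Set.univ f)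
    (fstar : ℝ) (hfstar : ∀ y ∈ Xstar, f y = fstar)
    (β c B Bf : ℝ) (hβ : β ∈ Set.Ioo (0 : ℝ) 1) (hc : 0 < c) (hB : 0 < B)
    (hBf : 0 ≤ Bf)
    (γ C : ℝ) (hγ : γ = β * (1 - β) / (c * B ^ 2))
    (hC : C = (1 + 2 * β * (1 - β) / (c * B ^ 2)) * Bf ^ 2)
    (α : ℕ → ℝ) (hαpos : ∀ t, 0 < α t) (hαmono : ∀ t, α (t + 1) ≤ α t)
    (x : ℕ → Ω' → EuclideanSpace ℝ (Fin n))
    (x0 : EuclideanSpace ℝ (Fin n)) (hx0 : ∀ ω, x 0 ω = x0)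
    -- measurability and integrability of all quantities appearing below
    (hmeas : ∀ t, Measurable (x t))
    (hInt1 : ∀ t, Integrable (fun ω => (infDist (x t ω) Xstar) ^ 2) μ)
    (hInt2 : ∀ t, Integrable (fun ω => f (x t ω)) μ)
    (hInt3 : ∀ t, Integrable (fun ω => (infDist (x t ω) X) ^ 2) μ)
    (hInt4 : ∀ k, Integrable (fun ω => f (avgIter α x k ω)) μ)
    (hInt5 : ∀ k, Integrable (fun ω => (infDist (avgIter α x k ω) X) ^ 2) μ)
    -- the per-step recurrence (Lemma 5 of the paper)
    (hrec : ∀ t, ∫ ω, (infDist (x (t + 1) ω) Xstar) ^ 2 ∂μ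
        ≤ ∫ ω, (infDist (x t ω) Xstar) ^ 2 ∂μ
          - 2 * α t * ∫ ω, (f (x t ω) - fstar) ∂μ
          - γ * ∫ ω, (infDist (x t ω) X) ^ 2 ∂μ + C * α t ^ 2) :
    ∀ k : ℕ, 1 ≤ k →
      ((∫ ω, f (avgIter α x k ω) ∂μ) - fstar
          ≤ (infDist x0 Xstar) ^ 2 / (2 * ∑ t ∈ Finset.range k, α t)
            + C * (∑ t ∈ Finset.range k, α t ^ 2)
                / (2 * ∑ t ∈ Finset.range k, α t)) ∧
      (2 * ((∫ ω, f (avgIter α x k ω) ∂μ) - fstar)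
          + γ / α 0 * ∫ ω, (infDist (avgIter α x k ω) X) ^ 2 ∂μ
        ≤ (infDist x0 Xstar) ^ 2 / (∑ t ∈ Finset.range k, α t)
          + C * (∑ t ∈ Finset.range k, α t ^ 2) / (∑ t ∈ Finset.range k, α t)) := by
  -- abbreviations
  set A : ℕ → ℝ := fun t => ∫ ω, (infDist (x t ω) Xstar) ^ 2 ∂μ with hA
  set G : ℕ → ℝ := fun t => ∫ ω, (infDist (x t ω) X) ^ 2 ∂μ with hG
  set F : ℕ → ℝ := fun t => ∫ ω, (f (x t ω) - fstar) ∂μ with hF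
  have hγnn : 0 ≤ γ := by
    rw [hγ]
    have h1 := hβ.1
    have h2 := hβ.2
    apply div_nonneg (mul_nonneg h1.le (by linarith)) (by positivity)
  have hA0 : A 0 = (infDist x0 Xstar) ^ 2 := by
    simp only [hA]
    simp [hx0]
  have hAnn : ∀ t, 0 ≤ A t := fun t => integral_nonneg fun ω => sq_nonneg _
  have hGnn : ∀ t, 0 ≤ G t := fun t => integral_nonneg fun ω => sq_nonneg _
  have hFeq : ∀ t, F t = (∫ ω, f (x t ω) ∂μ) - fstar := by
    intro t
    simp only [hF]
    rw [integral_sub (hInt2 t) (integrable_const _)]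
    simp
  -- telescoping
  have key : ∀ k : ℕ, A k + ∑ t ∈ Finset.range k, (2 * α t * F t + γ * G t)
      ≤ A 0 + C * ∑ t ∈ Finset.range k, α t ^ 2 := by
    intro k
    induction k with
    | zero => simp
    | succ k ih =>
      have h := hrec k
      rw [Finset.sum_range_succ, Finset.sum_range_succ, mul_add]
      have : A (k + 1) ≤ A k - 2 * α k * F k - γ * G k + C * α k ^ 2 := h
      linarith
  intro k hk
  -- basic positivity
  set S : ℝ := ∑ t ∈ Finset.range k, α t with hS
  have hrange : (Finset.range k).Nonempty := Finset.nonempty_range_iff.2 (by omega)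
  have hSpos : 0 < S := Finset.sum_pos (fun t _ => hαpos t) hrange
  have hwnn : ∀ t ∈ Finset.range k, 0 ≤ α t := fun t _ => (hαpos t).le
  have hα0 : ∀ t, α t ≤ α 0 := fun t =>
    antitone_nat_of_succ_le hαmono (Nat.zero_le t)
  -- Jensen for f
  have hfpt : ∀ ω, f (avgIter α x k ω)
      ≤ S⁻¹ * ∑ t ∈ Finset.range k, α t * f (x t ω) := by
    intro ω
    have := hf.map_centerMass_le (t := Finset.range k) (w := α) (p := fun t => x t ω)
      hwnn hSpos (fun t _ => Set.mem_univ _)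
    have heq : (Finset.range k).centerMass α (fun t => x t ω) = avgIter α x k ω := rfl
    rw [heq] at this
    refine this.trans_eq ?_
    simp [Finset.centerMass, smul_eq_mul, Function.comp]
    exact Or.inl hS.symm
  have hIf : ∫ ω, f (avgIter α x k ω) ∂μ
      ≤ S⁻¹ * ∑ t ∈ Finset.range k, α t * (∫ ω, f (x t ω) ∂μ) := by
    have hint : Integrable (fun ω => S⁻¹ * ∑ t ∈ Finset.range k, α t * f (x t ω)) μ :=
      (integrable_finset_sum _ (fun t _ => (hInt2 t).const_mul (α t))).const_mul _
    calc ∫ ω, f (avgIter α x k ω) ∂μ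
        ≤ ∫ ω, S⁻¹ * ∑ t ∈ Finset.range k, α t * f (x t ω) ∂μ :=
          integral_mono (hInt4 k) hint (fun ω => hfpt ω)
      _ = S⁻¹ * ∑ t ∈ Finset.range k, α t * (∫ ω, f (x t ω) ∂μ) := by
          rw [integral_const_mul]
          congr 1
          rw [integral_finset_sum _ (fun t _ => (hInt2 t).const_mul (α t))]
          exact Finset.sum_congr rfl fun t _ => integral_const_mul _ _
  -- Jensen for dist^2
  have hdpt : ∀ ω, (infDist (avgIter α x k ω) X) ^ 2
      ≤ S⁻¹ * ∑ t ∈ Finset.range k, α t * (infDist (x t ω) X) ^ 2 := by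
    intro ω
    have h1 : infDist (avgIter α x k ω) X
        ≤ (Finset.range k).centerMass α (fun t => infDist (x t ω) X) :=
      infDist_centerMass_le hXne hXcl hXcv _ α hwnn hSpos _
    have h2 : ((Finset.range k).centerMass α (fun t => infDist (x t ω) X)) ^ 2
        ≤ (Finset.range k).centerMass α (fun t => (infDist (x t ω) X) ^ 2) :=
      sq_centerMass_le _ _ _ hwnn hSpos (fun t _ => infDist_nonneg)
    have h3 : (infDist (avgIter α x k ω) X) ^ 2
        ≤ ((Finset.range k).centerMass α (fun t => infDist (x t ω) X)) ^ 2 :=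
      pow_le_pow_left₀ infDist_nonneg h1 2
    refine (h3.trans h2).trans_eq ?_
    simp [Finset.centerMass, smul_eq_mul]
    exact Or.inl hS.symm
  have hId : ∫ ω, (infDist (avgIter α x k ω) X) ^ 2 ∂μ
      ≤ S⁻¹ * ∑ t ∈ Finset.range k, α t * G t := by
    have hint : Integrable (fun ω => S⁻¹ * ∑ t ∈ Finset.range k, α t * (infDist (x t ω) X) ^ 2) μ :=
      (integrable_finset_sum _ (fun t _ => (hInt3 t).const_mul (α t))).const_mul _
    calc ∫ ω, (infDist (avgIter α x k ω) X) ^ 2 ∂μ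
        ≤ ∫ ω, S⁻¹ * ∑ t ∈ Finset.range k, α t * (infDist (x t ω) X) ^ 2 ∂μ :=
          integral_mono (hInt5 k) hint (fun ω => hdpt ω)
      _ = S⁻¹ * ∑ t ∈ Finset.range k, α t * G t := by
          rw [integral_const_mul]
          congr 1
          rw [integral_finset_sum _ (fun t _ => (hInt3 t).const_mul (α t))]
          exact Finset.sum_congr rfl fun t _ => integral_const_mul _ _
  set If : ℝ := ∫ ω, f (avgIter α x k ω) ∂μ with hIfdef
  set Id : ℝ := ∫ ω, (infDist (avgIter α x k ω) X) ^ 2 ∂μ with hIddef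
  have hIdnn : 0 ≤ Id := integral_nonneg fun ω => sq_nonneg _
  -- from key
  have hsum : 2 * ∑ t ∈ Finset.range k, α t * F t + γ * ∑ t ∈ Finset.range k, G t
      ≤ (infDist x0 Xstar) ^ 2 + C * ∑ t ∈ Finset.range k, α t ^ 2 := by
    have h := key k
    rw [hA0] at h
    have hAk := hAnn k
    have : ∑ t ∈ Finset.range k, (2 * α t * F t + γ * G t)
        = 2 * ∑ t ∈ Finset.range k, α t * F t + γ * ∑ t ∈ Finset.range k, G t := by
      rw [Finset.sum_add_distrib, Finset.mul_sum, Finset.mul_sum]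
      congr 1
      exact Finset.sum_congr rfl fun t _ => by ring
    linarith [this ▸ h]
  -- step B final form
  have hBfin : S * (If - fstar) ≤ ∑ t ∈ Finset.range k, α t * F t := by
    have h1 : S * If ≤ ∑ t ∈ Finset.range k, α t * (∫ ω, f (x t ω) ∂μ) := by
      have := mul_le_mul_of_nonneg_left hIf hSpos.le
      rwa [← mul_assoc, mul_inv_cancel₀ hSpos.ne', one_mul] at this
    have h2 : ∑ t ∈ Finset.range k, α t * F t
        = ∑ t ∈ Finset.range k, α t * (∫ ω, f (x t ω) ∂μ) - S * fstar := by
      rw [hS, Finset.sum_mul, ← Finset.sum_sub_distrib]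
      exact Finset.sum_congr rfl fun t _ => by rw [hFeq t]; ring
    rw [h2]
    linarith
  -- step C final form
  have hCfin : γ / α 0 * (S * Id) ≤ γ * ∑ t ∈ Finset.range k, G t := by
    have h1 : S * Id ≤ ∑ t ∈ Finset.range k, α t * G t := by
      have := mul_le_mul_of_nonneg_left hId hSpos.le
      rwa [← mul_assoc, mul_inv_cancel₀ hSpos.ne', one_mul] at this
    have h2 : ∑ t ∈ Finset.range k, α t * G t ≤ α 0 * ∑ t ∈ Finset.range k, G t := by
      rw [Finset.mul_sum]
      exact Finset.sum_le_sum fun t _ => mul_le_mul_of_nonneg_right (hα0 t) (hGnn t)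
    have hα0pos := hαpos 0
    calc γ / α 0 * (S * Id) ≤ γ / α 0 * (α 0 * ∑ t ∈ Finset.range k, G t) := by
          apply mul_le_mul_of_nonneg_left (h1.trans h2) (by positivity)
      _ = γ * ∑ t ∈ Finset.range k, G t := by
          field_simp
  -- combine
  have hmain : 2 * (S * (If - fstar)) + γ / α 0 * (S * Id)
      ≤ (infDist x0 Xstar) ^ 2 + C * ∑ t ∈ Finset.range k, α t ^ 2 := by
    linarith
  have hγα : 0 ≤ γ / α 0 := div_nonneg hγnn (hαpos 0).le
  have hterm : 0 ≤ γ / α 0 * (S * Id) := mul_nonneg hγα (mul_nonneg hSpos.le hIdnn)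
  constructor
  · rw [← add_div, le_div_iff₀ (by linarith)]
    have h1 : (If - fstar) * (2 * S) = 2 * (S * (If - fstar)) := by ring
    rw [h1]
    linarith
  · rw [← add_div, le_div_iff₀ hSpos]
    have h1 : (2 * (If - fstar) + γ / α 0 * Id) * S
        = 2 * (S * (If - fstar)) + γ / α 0 * (S * Id) := by ring
    rw [h1]
    linarith
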